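/- Let f, g ∈ ℝ[x,y] be polynomials of degree at most 4 with homogeneous decompositions f = f₂ + f₃ + f₄ and g = g₂ + g₃ + g₄ (no terms of degree 0 or 1), where f_k, g_k are homogeneous of degree k. Assume that the coefficients of x² and of xy in f₂ and in g₂, and the coefficient of x³ in f₃ and in g₃, all vanish. Assume further that f(a) ≥ 0 for all a ∈ ℝ², that f₂ ≠ 0, and that the univariate polynomial D_f(y) := (f₃² − 4 f₂ f₄)(1, y) satisfies D_f''(0) ≠ 0. Then there exist ε > 0 and δ > 0 such that (f + ε g)(a) ≥ 0 for all a ∈ ℝ² with ‖a‖ < δ. -/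

import Mathlib

open MvPolynomial

noncomputable section

/-- Bivariate real polynomials (variables `x = X 0`, `y = X 1`). -/
abbrev MvP2 : Type := MvPolynomial (Fin 2) ℝ

/-- The discriminant `D_f(y) = (f₃² − 4 f₂ f₄)(1, y)` as a univariate polynomial in `y`. -/
def Ddisc (f₂ f₃ f₄ : MvP2) : Polynomial ℝ :=
  MvPolynomial.aeval ![(1 : Polynomial ℝ), Polynomial.X] (f₃ ^ 2 - 4 * f₂ * f₄)

/- ### Auxiliary lemmas -/

lemma fin2_finsupp (m : Fin 2 →₀ ℕ) :
    m = Finsupp.single 0 (m 0) + Finsupp.single 1 (m 1) := by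
  ext i
  fin_cases i <;> simp [Finsupp.single_apply]

lemma fin2_degree (m : Fin 2 →₀ ℕ) : m.degree = m 0 + m 1 := by
  rw [Finsupp.degree_apply]
  rw [Finset.sum_subset (Finset.subset_univ m.support)]
  · simp [Fin.sum_univ_two]
  · intro i _ hi
    simpa using hi

lemma homog_decomp (n : ℕ) (p : MvP2) (hp : p.IsHomogeneous n) :
    p = ∑ i ∈ Finset.range (n+1),
      monomial (Finsupp.single 0 i + Finsupp.single 1 (n - i))
        (coeff (Finsupp.single 0 i + Finsupp.single 1 (n - i)) p) := by
  ext m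
  rw [coeff_sum]
  simp only [coeff_monomial]
  by_cases hd : m 0 + m 1 = n
  · rw [Finset.sum_eq_single (m 0)]
    · rw [if_pos, ← hd, Nat.add_sub_cancel_left, ← fin2_finsupp]
      rw [← hd, Nat.add_sub_cancel_left, ← fin2_finsupp]
    · intro i hi hne
      rw [if_neg]
      intro h
      apply hne
      have := congrArg (fun s => s 0) h
      simpa [Finsupp.single_apply] using this
    · intro h
      exact absurd (Finset.mem_range.mpr (by omega)) h
  · have h0 : coeff m p = 0 := by
      apply hp.coeff_eq_zero
      rw [fin2_degree]; exact hd
    rw [h0]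
    symm
    apply Finset.sum_eq_zero
    intro i hi
    rw [if_neg]
    intro h
    apply hd
    have h0 := congrArg (fun s => s 0) h
    have h1 := congrArg (fun s => s 1) h
    simp [Finsupp.single_apply] at h0 h1
    simp at hi
    omega

lemma homog2_eq (p : MvP2) (hp : p.IsHomogeneous 2)
    (h2 : coeff (Finsupp.single (0 : Fin 2) 2) p = 0)
    (h11 : coeff (Finsupp.single (0 : Fin 2) 1 + Finsupp.single (1 : Fin 2) 1) p = 0) :
    p = monomial (Finsupp.single 1 2) (coeff (Finsupp.single 1 2) p) := by
  conv_lhs => rw [homog_decomp 2 p hp]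
  rw [Finset.sum_range_succ, Finset.sum_range_succ, Finset.sum_range_one]
  norm_num
  rw [h11, h2]
  simp

lemma homog3_eq (p : MvP2) (hp : p.IsHomogeneous 3)
    (h3 : coeff (Finsupp.single (0 : Fin 2) 3) p = 0) :
    p = monomial (Finsupp.single 0 2 + Finsupp.single 1 1)
          (coeff (Finsupp.single 0 2 + Finsupp.single 1 1) p)
      + monomial (Finsupp.single 0 1 + Finsupp.single 1 2)
          (coeff (Finsupp.single 0 1 + Finsupp.single 1 2) p)
      + monomial (Finsupp.single 1 3) (coeff (Finsupp.single 1 3) p) := by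
  conv_lhs => rw [homog_decomp 3 p hp]
  rw [Finset.sum_range_succ, Finset.sum_range_succ, Finset.sum_range_succ, Finset.sum_range_one]
  norm_num
  rw [h3]
  simp
  ring

lemma homog4_eq (p : MvP2) (hp : p.IsHomogeneous 4) :
    p = monomial (Finsupp.single 0 4) (coeff (Finsupp.single 0 4) p)
      + monomial (Finsupp.single 0 3 + Finsupp.single 1 1)
          (coeff (Finsupp.single 0 3 + Finsupp.single 1 1) p)
      + monomial (Finsupp.single 0 2 + Finsupp.single 1 2)
          (coeff (Finsupp.single 0 2 + Finsupp.single 1 2) p)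
      + monomial (Finsupp.single 0 1 + Finsupp.single 1 3)
          (coeff (Finsupp.single 0 1 + Finsupp.single 1 3) p)
      + monomial (Finsupp.single 1 4) (coeff (Finsupp.single 1 4) p) := by
  conv_lhs => rw [homog_decomp 4 p hp]
  rw [Finset.sum_range_succ, Finset.sum_range_succ, Finset.sum_range_succ,
    Finset.sum_range_succ, Finset.sum_range_one]
  norm_num
  ring

lemma small2 (c d e : ℝ) (h : ∀ t : ℝ, 0 ≤ c*t^2 + d*t^3 + e*t^4) : 0 ≤ c := by
  by_contra hc
  push_neg at hc
  set M : ℝ := |d| + |e| + 1 with hM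
  have hM0 : 0 < M := by positivity
  set t : ℝ := min 1 (-c/(4*M)) with htdef
  have ht0 : 0 < t := lt_min one_pos (div_pos (by linarith) (by positivity))
  have ht1 : t ≤ 1 := min_le_left _ _
  have ht2 : t ≤ -c/(4*M) := min_le_right _ _
  clear_value M t
  have ht3 : 4*M*t ≤ -c := by
    rw [le_div_iff₀ (by positivity : (0:ℝ) < 4*M)] at ht2; linarith
  have h34 : t^4 ≤ t^3 := by nlinarith [pow_pos ht0 3]
  have h1 : d*t^3 ≤ M*t^3 := by nlinarith [le_abs_self d, abs_nonneg e, pow_pos ht0 3]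
  have h2 : e*t^4 ≤ M*t^4 := by nlinarith [le_abs_self e, abs_nonneg d, pow_pos ht0 4]
  have hMt : M*t^4 ≤ M*t^3 := by nlinarith
  have hneg : 2*M*t ≤ -c/2 := by linarith
  have key : 2*M*t^3 ≤ (-c/2) * t^2 := by
    nlinarith [mul_le_mul_of_nonneg_right hneg (sq_nonneg t)]
  have hct : c*t^2 < 0 := mul_neg_of_neg_of_pos hc (pow_pos ht0 2)
  have := h t
  nlinarith

lemma small4 (A B C D E : ℝ)
    (h : ∀ t : ℝ, 0 ≤ A*t^4 + B*t^5 + C*t^6 + D*t^7 + E*t^8) : 0 ≤ A := by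
  by_contra hA
  push_neg at hA
  set M : ℝ := |B| + |C| + |D| + |E| + 1 with hM
  have hM0 : 0 < M := by positivity
  set t : ℝ := min 1 (-A/(8*M)) with htdef
  have ht0 : 0 < t := lt_min one_pos (div_pos (by linarith) (by positivity))
  have ht1 : t ≤ 1 := min_le_left _ _
  have ht2 : t ≤ -A/(8*M) := min_le_right _ _
  clear_value M t
  have ht3 : 8*M*t ≤ -A := by
    rw [le_div_iff₀ (by positivity : (0:ℝ) < 8*M)] at ht2; linarith
  have h65 : t^6 ≤ t^5 := by nlinarith [pow_pos ht0 5]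
  have h76 : t^7 ≤ t^6 := by nlinarith [pow_pos ht0 6]
  have h87 : t^8 ≤ t^7 := by nlinarith [pow_pos ht0 7]
  have h1 : B*t^5 ≤ M*t^5 := by
    nlinarith [le_abs_self B, abs_nonneg C, abs_nonneg D, abs_nonneg E, pow_pos ht0 5]
  have h2 : C*t^6 ≤ M*t^6 := by
    nlinarith [le_abs_self C, abs_nonneg B, abs_nonneg D, abs_nonneg E, pow_pos ht0 6]
  have h3 : D*t^7 ≤ M*t^7 := by
    nlinarith [le_abs_self D, abs_nonneg B, abs_nonneg C, abs_nonneg E, pow_pos ht0 7]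
  have h4 : E*t^8 ≤ M*t^8 := by
    nlinarith [le_abs_self E, abs_nonneg B, abs_nonneg C, abs_nonneg D, pow_pos ht0 8]
  have hm1 : M*t^6 ≤ M*t^5 := by nlinarith
  have hm2 : M*t^7 ≤ M*t^5 := by nlinarith
  have hm3 : M*t^8 ≤ M*t^5 := by nlinarith
  have hneg : 4*M*t ≤ -A/2 := by linarith
  have key : 4*M*t^5 ≤ (-A/2) * t^4 := by
    nlinarith [mul_le_mul_of_nonneg_right hneg (pow_nonneg ht0.le 4)]
  have hct : A*t^4 < 0 := mul_neg_of_neg_of_pos hA (pow_pos ht0 4)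
  have := h t
  nlinarith

lemma quadpos (c b e : ℝ) (hc : 0 < c) (hd : b^2 < 4*c*e) :
    ∃ μ : ℝ, 0 < μ ∧ ∀ u v : ℝ, μ*(u^2+v^2) ≤ c*u^2 + b*u*v + e*v^2 := by
  have he : 0 < e := by nlinarith [sq_nonneg b]
  refine ⟨(4*c*e - b^2)/(4*(c+e)), div_pos (by linarith) (by positivity), fun u v => ?_⟩
  set μ : ℝ := (4*c*e - b^2)/(4*(c+e)) with hμ
  have hce : 0 < 4*(c+e) := by positivity
  have hμe : μ * (4*(c+e)) = 4*c*e - b^2 := div_mul_cancel₀ _ (ne_of_gt hce)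
  have hcμ : 0 < c - μ := by nlinarith [sq_nonneg b]
  have hkey : 4*(c-μ)*(e-μ) - b^2 ≥ 0 := by nlinarith [sq_nonneg (c - e), sq_nonneg μ]
  nlinarith [sq_nonneg (2*(c-μ)*u + b*v), sq_nonneg v, mul_nonneg hkey (sq_nonneg v)]

lemma lb (co u B : ℝ) (h : |u| ≤ B) : -(|co| * B) ≤ co * u := by
  have h1 : |co * u| ≤ |co| * B := by
    rw [abs_mul]; exact mul_le_mul_of_nonneg_left h (abs_nonneg co)
  linarith [neg_abs_le (co*u)]

section mon
variable {x y B : ℝ}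

lemma axy2 (hxB : |x| ≤ B) : |x*y^2| ≤ B*(x^4+y^2) := by
  have h1 : |x*y^2| = |x| * y^2 := by rw [abs_mul, abs_pow, sq_abs]
  nlinarith [mul_le_mul_of_nonneg_right hxB (sq_nonneg y),
    mul_nonneg ((abs_nonneg x).trans hxB) (pow_nonneg (abs_nonneg x) 4),
    sq_abs x, pow_nonneg (abs_nonneg x) 4, sq_nonneg (x^2), sq_nonneg x,
    mul_nonneg ((abs_nonneg x).trans hxB) (sq_nonneg (x^2))]

lemma ay3 (hyB : |y| ≤ B) : |y^3| ≤ B*(x^4+y^2) := by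
  have h1 : |y^3| = |y| * y^2 := by rw [pow_succ' y 2, abs_mul, abs_pow, sq_abs, mul_comm]
  nlinarith [mul_le_mul_of_nonneg_right hyB (sq_nonneg y),
    mul_nonneg ((abs_nonneg y).trans hyB) (sq_nonneg (x^2))]

lemma ax3y (hxB : |x| ≤ B) : |x^3*y| ≤ B*(x^4+y^2) := by
  have h1 : |x^3*y| = |x|^3 * |y| := by rw [abs_mul, abs_pow]
  have h2 : |x|^2 * |y| ≤ (|x|^4 + |y|^2)/2 := by nlinarith [sq_nonneg (|x|^2 - |y|)]
  have hx4 : |x|^4 = x^4 := by rw [← abs_pow]; exact abs_of_nonneg (by positivity)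
  have hy2 : |y|^2 = y^2 := sq_abs y
  rw [hx4, hy2] at h2
  have hB0 : 0 ≤ B := (abs_nonneg x).trans hxB
  have h3 : |x|^3 * |y| = |x| * (|x|^2 * |y|) := by ring
  have h4 : |x| * (|x|^2 * |y|) ≤ B*((x^4+y^2)/2) := by
    apply mul_le_mul hxB _ (by positivity) hB0
    linarith
  have h5 : B*((x^4+y^2)/2) ≤ B*(x^4+y^2) := by nlinarith [sq_nonneg (x^2), sq_nonneg y]
  linarith [h1 ▸ (h3 ▸ h4)]

lemma ax2y2 (hx1 : |x| ≤ 1) (hxB : |x| ≤ B) : |x^2*y^2| ≤ B*(x^4+y^2) := by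
  have h1 : |x^2*y^2| = x^2*y^2 := abs_of_nonneg (by positivity)
  have h2 : x^2 ≤ B := by nlinarith [sq_abs x, abs_nonneg x]
  have hB0 : 0 ≤ B := (abs_nonneg x).trans hxB
  nlinarith [mul_le_mul_of_nonneg_right h2 (sq_nonneg y), mul_nonneg hB0 (sq_nonneg (x^2))]

lemma axy3 (hy1 : |y| ≤ 1) (hxB : |x| ≤ B) : |x*y^3| ≤ B*(x^4+y^2) := by
  have h1 : |x*y^3| = (|x| * |y|)*y^2 := by
    rw [abs_mul, abs_pow, pow_succ' |y| 2, sq_abs]; ring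
  have h2 : |x| * |y| ≤ B := by nlinarith [abs_nonneg x, abs_nonneg y, (abs_nonneg x).trans hxB]
  have hB0 : 0 ≤ B := (abs_nonneg x).trans hxB
  nlinarith [mul_le_mul_of_nonneg_right h2 (sq_nonneg y), mul_nonneg hB0 (sq_nonneg (x^2))]

lemma ay4 (hy1 : |y| ≤ 1) (hyB : |y| ≤ B) : |y^4| ≤ B*(x^4+y^2) := by
  have h1 : |y^4| = y^2*y^2 := by
    rw [abs_of_nonneg (by positivity : (0:ℝ) ≤ y^4)]; ring
  have h2 : y^2 ≤ B := by nlinarith [sq_abs y, abs_nonneg y]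
  have hB0 : 0 ≤ B := (abs_nonneg y).trans hyB
  nlinarith [mul_le_mul_of_nonneg_right h2 (sq_nonneg y), mul_nonneg hB0 (sq_nonneg (x^2))]

lemma ay2 : |y^2| ≤ 1*(x^4+y^2) := by
  rw [abs_of_nonneg (sq_nonneg y)]
  nlinarith [sq_nonneg (x^2)]

lemma ax2y : |x^2*y| ≤ 1*(x^4+y^2) := by
  have h1 : |x^2*y| = x^2 * |y| := by rw [abs_mul, abs_pow, sq_abs]
  nlinarith [sq_nonneg (x^2 - |y|), sq_abs y, abs_nonneg y, sq_nonneg (x^2 + |y|)]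

lemma ax4 : |x^4| ≤ 1*(x^4+y^2) := by
  rw [abs_of_nonneg (by positivity : (0:ℝ) ≤ x^4)]
  nlinarith [sq_nonneg y]
end mon

set_option maxHeartbeats 1000000 in
lemma key (c b c3 d e e3 e2 e1 e0 cg bg cg3 dg eg eg3 eg2 eg1 eg0 : ℝ)
    (hc : 0 < c) (hbe : b^2 < 4*c*e) :
    ∃ ε : ℝ, 0 < ε ∧ ∃ δ : ℝ, 0 < δ ∧ ∀ x y : ℝ, |x| < δ → |y| < δ →
    0 ≤ (c*y^2 + (b*x^2*y + c3*x*y^2 + d*y^3)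
          + (e*x^4 + e3*x^3*y + e2*x^2*y^2 + e1*x*y^3 + e0*y^4))
      + ε * (cg*y^2 + (bg*x^2*y + cg3*x*y^2 + dg*y^3)
          + (eg*x^4 + eg3*x^3*y + eg2*x^2*y^2 + eg1*x*y^3 + eg0*y^4)) := by
  obtain ⟨μ, hμ, hq⟩ := quadpos c b e hc hbe
  set Cf : ℝ := |c3|+|d|+|e3|+|e2|+|e1|+|e0| with hCf
  have hCf0 : 0 ≤ Cf := by positivity
  set K : ℝ := |cg|+|bg|+|cg3|+|dg|+|eg|+|eg3|+|eg2|+|eg1|+|eg0| + 1 with hK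
  have hK0 : 0 < K := by positivity
  set ε : ℝ := μ/(4*K) with hε
  have hε0 : 0 < ε := by positivity
  set d0 : ℝ := μ/(4*(Cf+1)) with hd0
  have hd00 : 0 < d0 := by positivity
  have hμd : μ = 4*d0*(Cf+1) := by rw [hd0]; field_simp
  have hμK : μ = 4*ε*K := by rw [hε]; field_simp
  clear_value ε d0
  refine ⟨ε, hε0, min 1 d0, lt_min one_pos hd00, fun x y hx hy => ?_⟩
  have hx1 : |x| ≤ 1 := (lt_min_iff.mp hx).1.le
  have hy1 : |y| ≤ 1 := (lt_min_iff.mp hy).1.le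
  have hxd : |x| ≤ d0 := (lt_min_iff.mp hx).2.le
  have hyd : |y| ≤ d0 := (lt_min_iff.mp hy).2.le
  have hS : (0:ℝ) ≤ x^4 + y^2 := by positivity
  have t1 := lb c3 (x*y^2) (d0*(x^4+y^2)) (axy2 hxd)
  have t2 := lb d (y^3) (d0*(x^4+y^2)) (ay3 hyd)
  have t3 := lb e3 (x^3*y) (d0*(x^4+y^2)) (ax3y hxd)
  have t4 := lb e2 (x^2*y^2) (d0*(x^4+y^2)) (ax2y2 hx1 hxd)
  have t5 := lb e1 (x*y^3) (d0*(x^4+y^2)) (axy3 hy1 hxd)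
  have t6 := lb e0 (y^4) (d0*(x^4+y^2)) (ay4 hy1 hyd)
  have s1 := lb (ε*cg) (y^2) (1*(x^4+y^2)) ay2
  have s2 := lb (ε*bg) (x^2*y) (1*(x^4+y^2)) ax2y
  have s3 := lb (ε*cg3) (x*y^2) (1*(x^4+y^2)) (axy2 hx1)
  have s4 := lb (ε*dg) (y^3) (1*(x^4+y^2)) (ay3 hy1)
  have s5 := lb (ε*eg) (x^4) (1*(x^4+y^2)) ax4
  have s6 := lb (ε*eg3) (x^3*y) (1*(x^4+y^2)) (ax3y hx1)
  have s7 := lb (ε*eg2) (x^2*y^2) (1*(x^4+y^2)) (ax2y2 hx1 hx1)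
  have s8 := lb (ε*eg1) (x*y^3) (1*(x^4+y^2)) (axy3 hy1 hx1)
  have s9 := lb (ε*eg0) (y^4) (1*(x^4+y^2)) (ay4 hy1 hy1)
  have bridgeF : (|c3|+|d|+|e3|+|e2|+|e1|+|e0|)*(d0*(x^4+y^2)) ≤ (μ/4)*(x^4+y^2) := by
    rw [hμd, ← hCf]
    nlinarith [mul_nonneg hd00.le hS]
  have bridgeG : (|ε*cg|+|ε*bg|+|ε*cg3|+|ε*dg|+|ε*eg|+|ε*eg3|+|ε*eg2|+|ε*eg1|+|ε*eg0|)
      *(1*(x^4+y^2)) ≤ (μ/4)*(x^4+y^2) := by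
    simp only [abs_mul, abs_of_pos hε0]
    rw [hμK, hK]
    nlinarith [mul_nonneg hε0.le hS]
  have hquad := hq y (x^2)
  have hrest : 0 ≤ μ*(x^4+y^2) := mul_nonneg hμ.le hS
  linarith only [hquad, t1, t2, t3, t4, t5, t6, s1, s2, s3, s4, s5, s6, s7, s8, s9,
    bridgeF, bridgeG, hrest]

set_option maxHeartbeats 2000000 in
/-- local nonnegativity of a perturbation `f + ε g` near the origin. -/
theorem stmt_5 (f₂ f₃ f₄ g₂ g₃ g₄ : MvP2)
    (hf2 : f₂.IsHomogeneous 2) (hf3 : f₃.IsHomogeneous 3) (hf4 : f₄.IsHomogeneous 4)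
    (hg2 : g₂.IsHomogeneous 2) (hg3 : g₃.IsHomogeneous 3) (hg4 : g₄.IsHomogeneous 4)
    (hfx2 : coeff (Finsupp.single (0 : Fin 2) 2) f₂ = 0)
    (hfxy : coeff (Finsupp.single (0 : Fin 2) 1 + Finsupp.single (1 : Fin 2) 1) f₂ = 0)
    (hfx3 : coeff (Finsupp.single (0 : Fin 2) 3) f₃ = 0)
    (hgx2 : coeff (Finsupp.single (0 : Fin 2) 2) g₂ = 0)
    (hgxy : coeff (Finsupp.single (0 : Fin 2) 1 + Finsupp.single (1 : Fin 2) 1) g₂ = 0)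
    (hgx3 : coeff (Finsupp.single (0 : Fin 2) 3) g₃ = 0)
    (hfpos : ∀ a : Fin 2 → ℝ, 0 ≤ eval a (f₂ + f₃ + f₄))
    (hf2ne : f₂ ≠ 0)
    (hD : Polynomial.eval 0
      (Polynomial.derivative (Polynomial.derivative (Ddisc f₂ f₃ f₄))) ≠ 0) :
    ∃ ε : ℝ, 0 < ε ∧ ∃ δ : ℝ, 0 < δ ∧ ∀ a : Fin 2 → ℝ, ‖a‖ < δ →
      0 ≤ eval a ((f₂ + f₃ + f₄) + ε • (g₂ + g₃ + g₄)) := by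
  -- coefficient names
  set c : ℝ := coeff (Finsupp.single 1 2) f₂ with hc_def
  set b : ℝ := coeff (Finsupp.single 0 2 + Finsupp.single 1 1) f₃ with hb_def
  set c3 : ℝ := coeff (Finsupp.single 0 1 + Finsupp.single 1 2) f₃ with hc3_def
  set d : ℝ := coeff (Finsupp.single 1 3) f₃ with hd_def
  set e : ℝ := coeff (Finsupp.single 0 4) f₄ with he_def
  set e3 : ℝ := coeff (Finsupp.single 0 3 + Finsupp.single 1 1) f₄ with he3_def
  set e2 : ℝ := coeff (Finsupp.single 0 2 + Finsupp.single 1 2) f₄ with he2_def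
  set e1 : ℝ := coeff (Finsupp.single 0 1 + Finsupp.single 1 3) f₄ with he1_def
  set e0 : ℝ := coeff (Finsupp.single 1 4) f₄ with he0_def
  set cg : ℝ := coeff (Finsupp.single 1 2) g₂ with hcg_def
  set bg : ℝ := coeff (Finsupp.single 0 2 + Finsupp.single 1 1) g₃ with hbg_def
  set cg3 : ℝ := coeff (Finsupp.single 0 1 + Finsupp.single 1 2) g₃ with hcg3_def
  set dg : ℝ := coeff (Finsupp.single 1 3) g₃ with hdg_def
  set eg : ℝ := coeff (Finsupp.single 0 4) g₄ with heg_def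
  set eg3 : ℝ := coeff (Finsupp.single 0 3 + Finsupp.single 1 1) g₄ with heg3_def
  set eg2 : ℝ := coeff (Finsupp.single 0 2 + Finsupp.single 1 2) g₄ with heg2_def
  set eg1 : ℝ := coeff (Finsupp.single 0 1 + Finsupp.single 1 3) g₄ with heg1_def
  set eg0 : ℝ := coeff (Finsupp.single 1 4) g₄ with heg0_def
  -- polynomial identities
  have hf2eq := homog2_eq f₂ hf2 hfx2 hfxy
  have hf3eq := homog3_eq f₃ hf3 hfx3
  have hf4eq := homog4_eq f₄ hf4
  have hg2eq := homog2_eq g₂ hg2 hgx2 hgxy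
  have hg3eq := homog3_eq g₃ hg3 hgx3
  have hg4eq := homog4_eq g₄ hg4
  rw [← hc_def] at hf2eq
  rw [← hb_def, ← hc3_def, ← hd_def] at hf3eq
  rw [← he_def, ← he3_def, ← he2_def, ← he1_def, ← he0_def] at hf4eq
  rw [← hcg_def] at hg2eq
  rw [← hbg_def, ← hcg3_def, ← hdg_def] at hg3eq
  rw [← heg_def, ← heg3_def, ← heg2_def, ← heg1_def, ← heg0_def] at hg4eq
  -- evaluation formulas
  have evalF : ∀ a : Fin 2 → ℝ, eval a (f₂ + f₃ + f₄)
      = (c*(a 1)^2 + (b*(a 0)^2*(a 1) + c3*(a 0)*(a 1)^2 + d*(a 1)^3)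
          + (e*(a 0)^4 + e3*(a 0)^3*(a 1) + e2*(a 0)^2*(a 1)^2
            + e1*(a 0)*(a 1)^3 + e0*(a 1)^4)) := by
    intro a
    rw [hf2eq, hf3eq, hf4eq]
    simp [eval_monomial, Finsupp.prod_add_index, Finsupp.prod_single_index]
    ring
  have evalG : ∀ a : Fin 2 → ℝ, eval a (g₂ + g₃ + g₄)
      = (cg*(a 1)^2 + (bg*(a 0)^2*(a 1) + cg3*(a 0)*(a 1)^2 + dg*(a 1)^3)
          + (eg*(a 0)^4 + eg3*(a 0)^3*(a 1) + eg2*(a 0)^2*(a 1)^2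
            + eg1*(a 0)*(a 1)^3 + eg0*(a 1)^4)) := by
    intro a
    rw [hg2eq, hg3eq, hg4eq]
    simp [eval_monomial, Finsupp.prod_add_index, Finsupp.prod_single_index]
    ring
  -- c > 0
  have hc0 : 0 ≤ c := by
    apply small2 c d e0
    intro t
    have := hfpos ![0, t]
    rw [evalF ![0, t]] at this
    simpa using this
  have hcne : c ≠ 0 := by
    intro h
    apply hf2ne
    rw [hf2eq, h, map_zero]
  have hcpos : 0 < c := lt_of_le_of_ne hc0 (Ne.symm hcne)
  -- b² ≤ 4ce
  have hquadnn : ∀ s : ℝ, 0 ≤ c*s^2 + b*s + e := by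
    intro s
    apply small4 (c*s^2 + b*s + e) (c3*s^2 + e3*s) (d*s^3 + e2*s^2) (e1*s^3) (e0*s^4)
    intro t
    have := hfpos ![t, s*t^2]
    rw [evalF ![t, s*t^2]] at this
    simp only [Matrix.cons_val_zero, Matrix.cons_val_one, Matrix.head_cons] at this
    nlinarith [this]
  have hdisc : b^2 - 4*c*e ≤ 0 := by
    have hq' : ∀ s : ℝ, 0 ≤ c*(s*s) + b*s + e := by
      intro s; linarith [hquadnn s, sq_nonneg s, (sq s ▸ rfl : s^2 = s*s)]
    have := discrim_le_zero hq'
    rwa [discrim] at this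
  -- b² ≠ 4ce from hD
  have hDcomp : Ddisc f₂ f₃ f₄ =
      Polynomial.C (b^2 - 4*c*e) * Polynomial.X^2
      + Polynomial.C (2*b*c3 - 4*c*e3) * Polynomial.X^3
      + Polynomial.C (c3^2 + 2*b*d - 4*c*e2) * Polynomial.X^4
      + Polynomial.C (2*c3*d - 4*c*e1) * Polynomial.X^5
      + Polynomial.C (d^2 - 4*c*e0) * Polynomial.X^6 := by
    rw [Ddisc, hf2eq, hf3eq, hf4eq]
    simp [aeval_monomial, Finsupp.prod_add_index, Finsupp.prod_single_index,
      map_sub, map_mul, map_add, Polynomial.algebraMap_eq, map_ofNat]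
    ring
  have hDval : Polynomial.eval 0
      (Polynomial.derivative (Polynomial.derivative (Ddisc f₂ f₃ f₄)))
      = 2 * (b^2 - 4*c*e) := by
    rw [hDcomp]
    simp [Polynomial.derivative_mul, Polynomial.derivative_pow]
    ring
  have hne : b^2 - 4*c*e ≠ 0 := by
    intro h
    apply hD
    rw [hDval, h]
    ring
  have hbe : b^2 < 4*c*e := by
    rcases lt_or_eq_of_le hdisc with h | h
    · linarith
    · exact absurd h hne
  -- apply key lemma
  obtain ⟨ε, hε0, δ, hδ0, hkey⟩ :=
    key c b c3 d e e3 e2 e1 e0 cg bg cg3 dg eg eg3 eg2 eg1 eg0 hcpos hbe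
  refine ⟨ε, hε0, δ, hδ0, fun a ha => ?_⟩
  have hx : |a 0| < δ := lt_of_le_of_lt (norm_le_pi_norm a 0) ha
  have hy : |a 1| < δ := lt_of_le_of_lt (norm_le_pi_norm a 1) ha
  have := hkey (a 0) (a 1) hx hy
  have heval : eval a ((f₂ + f₃ + f₄) + ε • (g₂ + g₃ + g₄))
      = eval a (f₂ + f₃ + f₄) + ε * eval a (g₂ + g₃ + g₄) := by
    simp [smul_eq_C_mul]
    ring
  rw [heval, evalF a, evalG a]
  exact this

end
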